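/- arXiv:1406.5953 — 2 statements merged into one kernel-verified Lean document; each statement's English description precedes it below -/
import Mathlib

section
/- Let F be a number field of degree d with ring of integers O_F and discriminant D_F, and let x = (x_σ) ∈ F_ℝ satisfy x_σ ≠ 0 for every embedding σ : F → ℂ. Then there exists a nonzero a ∈ O_F such that sup_{σ∈Σ} |σ(a)·x_σ| ≤ √d · |D_F|^{1/d} · N(x)^{1/d}. -/
open NumberField NumberField.InfinitePlace NumberField.mixedEmbedding MeasureTheory Finset

/-- For every `x ∈ F_ℝ ⊆ ℂ^Σ` with all components nonzero, there exists a nonzero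
algebraic integer `a ∈ O_F` with `sup_σ |σ(a) x_σ| ≤ √d ⬝ |D_F|^(1/d) ⬝ N(x)^(1/d)`. -/
theorem exists_integer_sup_bound (F : Type*) [Field F] [NumberField F]
    (d : ℕ) (hd : d = Module.finrank ℚ F)
    (x : (F →+* ℂ) → ℂ)
    (hxF : ∀ σ : F →+* ℂ, x ((starRingEnd ℂ).comp σ) = (starRingEnd ℂ) (x σ))
    (hx : ∀ σ : F →+* ℂ, x σ ≠ 0) :
    ∃ a : 𝓞 F, a ≠ 0 ∧ ∀ σ : F →+* ℂ,
      ‖σ (a : F) * x σ‖ ≤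
        Real.sqrt d * |(NumberField.discr F : ℝ)| ^ ((1 : ℝ) / d) *
          (∏ τ : F →+* ℂ, ‖x τ‖) ^ ((1 : ℝ) / d) := by
  classical
  set D : ℝ := |(NumberField.discr F : ℝ)| with hDdef
  have hD1 : (1 : ℝ) ≤ D := by
    rw [hDdef, ← Int.cast_abs]
    exact_mod_cast Int.one_le_abs (NumberField.discr_ne_zero F)
  have hD0 : (0 : ℝ) < D := lt_of_lt_of_le one_pos hD1
  set N : ℝ := ∏ τ : F →+* ℂ, ‖x τ‖ with hNdef
  have hN0 : (0 : ℝ) < N := Finset.prod_pos fun τ _ => norm_pos_iff.mpr (hx τ)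
  have hd0 : 0 < d := hd ▸ Module.finrank_pos
  have hdR : (0 : ℝ) < (d : ℝ) := by exact_mod_cast hd0
  set C : ℝ := Real.sqrt d * D ^ ((1 : ℝ) / d) * N ^ ((1 : ℝ) / d) with hCdef
  have hC0 : (0 : ℝ) < C := by
    refine mul_pos (mul_pos (Real.sqrt_pos.mpr hdR) ?_) ?_
    · exact Real.rpow_pos_of_pos hD0 _
    · exact Real.rpow_pos_of_pos hN0 _
  -- the absolute value of x is constant on fibers of mk
  have habs : ∀ σ : F →+* ℂ, ‖x (InfinitePlace.mk σ).embedding‖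
      = ‖x σ‖ := by
    intro σ
    rcases mk_eq_iff.mp (mk_embedding (InfinitePlace.mk σ)) with h | h
    · rw [h]
    · have hconj : ∀ φ : F →+* ℂ, (starRingEnd ℂ).comp φ = ComplexEmbedding.conjugate φ :=
        fun φ => RingHom.ext fun a => (ComplexEmbedding.conjugate_coe_eq φ a).symm
      have h' : (starRingEnd ℂ).comp ((InfinitePlace.mk σ).embedding) = σ :=
        (hconj _).trans h
      conv_rhs => rw [← h']
      rw [hxF, Complex.norm_conj]
  by_cases hd1 : d = 1
  · -- degree one case : take a = 1
    refine ⟨1, one_ne_zero, fun σ => ?_⟩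
    have hcard : Fintype.card (F →+* ℂ) = 1 := by
      rw [Embeddings.card]; omega
    haveI : Subsingleton (F →+* ℂ) := Fintype.card_le_one_iff_subsingleton.mp hcard.le
    have hprod : N = ‖x σ‖ := by
      rw [hNdef]; exact Fintype.prod_subsingleton _ σ
    have hCeq : C = D * N := by rw [hCdef, hd1]; simp
    simp only [map_one, OneMemClass.coe_one, one_mul]
    rw [hCeq, ← hprod]
    exact le_mul_of_one_le_left hN0.le hD1
  · have hd2 : 2 ≤ d := by omega
    -- the adelic weights
    set f : InfinitePlace F → NNReal :=
      fun w => Real.toNNReal (C / ‖x w.embedding‖) with hfdef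
    have hf : ∀ w : InfinitePlace F, (f w : ℝ) = C / ‖x w.embedding‖ := by
      intro w
      exact Real.coe_toNNReal _ (div_nonneg hC0.le (norm_nonneg _))
    have hprodfib : ∏ w : InfinitePlace F, ‖x w.embedding‖ ^ mult w = N := by
      rw [hNdef, ← Finset.prod_fiberwise Finset.univ InfinitePlace.mk
        (fun σ => ‖x σ‖)]
      refine Finset.prod_congr rfl fun w _ => ?_
      have : ∀ φ ∈ ({φ | InfinitePlace.mk φ = w} : Finset _),
          ‖x φ‖ = ‖x w.embedding‖ := by
        intro φ hφ
        rw [← (Finset.mem_filter.mp hφ).2, habs φ]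
      rw [Finset.prod_congr rfl this, Finset.prod_const, card_filter_mk_eq]
    have hprodf : ∏ w : InfinitePlace F, (f w : ℝ) ^ mult w = C ^ d / N := by
      simp_rw [hf, div_pow]
      rw [Finset.prod_div_distrib, hprodfib, Finset.prod_pow_eq_pow_sum, sum_mult_eq, ← hd]
    -- volume inequality
    have hvol : minkowskiBound F ↑1 < volume (convexBodyLT F f) := by
      rw [← ENNReal.toReal_lt_toReal (minkowskiBound_lt_top F ↑1).ne (by
        rw [convexBodyLT_volume]; exact ENNReal.coe_ne_top)]
      rw [minkowskiBound, volume_fundamentalDomain_fractionalIdealLatticeBasis,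
        Units.val_one, FractionalIdeal.absNorm_one, Rat.cast_one, ENNReal.ofReal_one, one_mul,
        mixedEmbedding.finrank, volume_fundamentalDomain_latticeBasis, convexBodyLT_volume]
      simp only [ENNReal.toReal_mul, ENNReal.toReal_pow, ENNReal.toReal_inv,
        ENNReal.toReal_ofNat, ENNReal.coe_toReal, NNReal.coe_mul, NNReal.coe_pow,
        NNReal.coe_ofNat, NNReal.coe_prod, NNReal.coe_real_pi, Real.coe_sqrt, coe_nnnorm,
        Int.norm_eq_abs]
      rw [hprodf, ← hDdef, ← hd]
      have hrank : nrRealPlaces F + 2 * nrComplexPlaces F = d :=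
        hd ▸ card_add_two_mul_card_eq_rank F
      have hmul1 : (1 / (d : ℝ)) * d = 1 := by field_simp
      have hCd : C ^ d = Real.sqrt d ^ d * (D * N) := by
        rw [hCdef, mul_pow, mul_pow, ← Real.rpow_natCast (D ^ ((1 : ℝ) / d)) d,
          ← Real.rpow_natCast (N ^ ((1 : ℝ) / d)) d, ← Real.rpow_mul hD0.le,
          ← Real.rpow_mul hN0.le, hmul1, Real.rpow_one, Real.rpow_one, mul_assoc]
      have hCdDiv : C ^ d / N = Real.sqrt d ^ d * D := by
        rw [hCd, mul_div_assoc, mul_div_assoc, div_self hN0.ne', mul_one]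
      have h2d : (2 : ℝ) ^ d = 2 ^ nrRealPlaces F *
          (2 ^ nrComplexPlaces F * 2 ^ nrComplexPlaces F) := by
        rw [← hrank, pow_add, two_mul, pow_add]
      have hbinv : ((2 : ℝ)⁻¹) ^ nrComplexPlaces F * 2 ^ nrComplexPlaces F = 1 := by
        rw [← mul_pow]; norm_num
      have hs1 : (1 : ℝ) ≤ Real.sqrt D := by
        rw [show (1 : ℝ) = Real.sqrt 1 by simp]
        exact Real.sqrt_le_sqrt hD1
      have hs0 : (0 : ℝ) < Real.sqrt D := lt_of_lt_of_le one_pos hs1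
      have hDs : Real.sqrt D * Real.sqrt D = D := Real.mul_self_sqrt hD0.le
      have ht : (2 : ℝ) ≤ Real.sqrt d ^ d := by
        have h1d : (1 : ℝ) ≤ Real.sqrt d := by
          rw [show (1 : ℝ) = Real.sqrt 1 by simp]
          exact Real.sqrt_le_sqrt (by exact_mod_cast hd0)
        calc (2 : ℝ) = Real.sqrt 2 ^ 2 := by
              rw [Real.sq_sqrt (by norm_num : (0:ℝ) ≤ 2)]
          _ ≤ Real.sqrt d ^ 2 := by
              gcongr
              exact_mod_cast hd2
          _ ≤ Real.sqrt d ^ d := pow_le_pow_right₀ h1d hd2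
      rw [hCdDiv, h2d]
      calc (2:ℝ)⁻¹ ^ nrComplexPlaces F * Real.sqrt D * (2 ^ nrRealPlaces F *
            (2 ^ nrComplexPlaces F * 2 ^ nrComplexPlaces F))
          = ((2:ℝ)⁻¹ ^ nrComplexPlaces F * 2 ^ nrComplexPlaces F) *
            (2 ^ nrRealPlaces F * (2 ^ nrComplexPlaces F * Real.sqrt D)) := by ring
        _ = 2 ^ nrRealPlaces F * (2 ^ nrComplexPlaces F * Real.sqrt D) := by
            rw [hbinv, one_mul]
        _ < 2 ^ nrRealPlaces F * (Real.pi ^ nrComplexPlaces F * (Real.sqrt d ^ d * D)) := by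
            refine mul_lt_mul_of_pos_left ?_ (by positivity)
            calc (2:ℝ) ^ nrComplexPlaces F * Real.sqrt D
                < 2 ^ nrComplexPlaces F * (2 * Real.sqrt D) := by
                  nlinarith [pow_pos (by norm_num : (0:ℝ) < 2) (nrComplexPlaces F)]
              _ ≤ Real.pi ^ nrComplexPlaces F * (Real.sqrt d ^ d * D) := by
                  refine mul_le_mul (pow_le_pow_left₀ (by norm_num) Real.two_le_pi _) ?_
                    (by positivity) (by positivity)
                  nlinarith [ht, hs1, hs0.le, hDs, hD0.le]
        _ = 2 ^ nrRealPlaces F * Real.pi ^ nrComplexPlaces F * (Real.sqrt d ^ d * D) := by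
            ring
    obtain ⟨a, ha0, haw⟩ := exists_ne_zero_mem_ringOfIntegers_lt F hvol
    refine ⟨a, ha0, fun σ => ?_⟩
    have h := haw (InfinitePlace.mk σ)
    rw [InfinitePlace.apply] at h
    have hfw : (f (InfinitePlace.mk σ) : ℝ) = C / ‖x σ‖ := by
      rw [hf, habs]
    rw [hfw] at h
    have hxσ : (0 : ℝ) < ‖x σ‖ := norm_pos_iff.mpr (hx σ)
    rw [norm_mul]
    exact ((lt_div_iff₀ hxσ).mp h).le
end

section
/- Let F be a number field of degree d with ring of integers O_F and discriminant D_F, and let h be a well-rounded hermitian metric on L = O_F^N. Then for every nonzero z ∈ L one has Π_{σ∈Σ} h_σ(z) ≥ d^{−3d/2} · |D_F|^{−1}. -/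
open NumberField
open scoped ComplexOrder

/-- The real quadratic form `q_h(x) = ∑_σ h_σ(x)` attached to a family of hermitian
matrices `(H_σ)`, where `h_σ(x) = σ(x)* H_σ σ(x)`. -/
noncomputable def hermQ {F : Type*} [Field F] [NumberField F] {N : ℕ}
    (H : (F →+* ℂ) → Matrix (Fin N) (Fin N) ℂ) (x : Fin N → F) : ℝ :=
  ∑ σ : F →+* ℂ,
    (dotProduct (star fun j => σ (x j)) ((H σ).mulVec fun j => σ (x j))).re

/-- A family `(H_σ)` defines a hermitian metric on `O_F^N` if each `H_σ` is positive
definite and `H_{σ̄}` is the entrywise conjugate of `H_σ`. -/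
def IsHermMetric {F : Type*} [Field F] [NumberField F] {N : ℕ}
    (H : (F →+* ℂ) → Matrix (Fin N) (Fin N) ℂ) : Prop :=
  (∀ σ : F →+* ℂ, (H σ).PosDef) ∧
    ∀ σ : F →+* ℂ, H ((starRingEnd ℂ).comp σ) = (H σ).map (starRingEnd ℂ)

/-- `(O_F^N, h)` is well rounded: the minimum of `q_h` over nonzero lattice points
is `1`, and the set `M(L,h)` of minimal vectors spans `F^N` over `F`. -/
def IsWellRounded {F : Type*} [Field F] [NumberField F] {N : ℕ}
    (H : (F →+* ℂ) → Matrix (Fin N) (Fin N) ℂ) : Prop :=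
  IsLeast {r : ℝ | ∃ x : Fin N → 𝓞 F, x ≠ 0 ∧ r = hermQ H (fun j => (x j : F))} 1 ∧
    Submodule.span F {v : Fin N → F |
      ∃ x : Fin N → 𝓞 F, (∀ j, v j = (x j : F)) ∧ hermQ H v = 1} = ⊤

lemma aux_conj_dot {N : ℕ} (M : Matrix (Fin N) (Fin N) ℂ) (v : Fin N → ℂ) :
    dotProduct (star fun j => (starRingEnd ℂ) (v j))
      ((M.map (starRingEnd ℂ)).mulVec fun j => (starRingEnd ℂ) (v j)) =
    (starRingEnd ℂ) (dotProduct (star v) (M.mulVec v)) := by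
  simp only [dotProduct, Matrix.mulVec, Pi.star_apply, Matrix.map_apply, map_sum, map_mul,
    RCLike.star_def, Complex.conj_conj]

lemma aux_dot_smul {N : ℕ} (M : Matrix (Fin N) (Fin N) ℂ) (c : ℂ) (v : Fin N → ℂ) :
    dotProduct (star (c • v)) (M.mulVec (c • v)) =
      (‖c‖ ^ 2 : ℝ) * dotProduct (star v) (M.mulVec v) := by
  rw [star_smul, Matrix.mulVec_smul, smul_dotProduct, dotProduct_smul]
  rw [smul_eq_mul, smul_eq_mul, ← mul_assoc, Complex.star_def, ← Complex.normSq_eq_conj_mul_self,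
    Complex.normSq_eq_norm_sq, Complex.sq_norm, Complex.normSq_eq_norm_sq]

/-- For a well-rounded hermitian metric `h` on `O_F^N`, every nonzero lattice vector
`z` satisfies `∏_σ h_σ(z) ≥ d^(-3d/2) |D_F|⁻¹`. -/
theorem prod_hermQ_lower_bound
    (F : Type*) [Field F] [NumberField F]
    (d : ℕ) (hd : d = Module.finrank ℚ F)
    (N : ℕ)
    (H : (F →+* ℂ) → Matrix (Fin N) (Fin N) ℂ) (hH : IsHermMetric H)
    (hwr : IsWellRounded H)
    (z : Fin N → 𝓞 F) (hz : z ≠ 0) :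
    (d : ℝ) ^ (-(3 * (d : ℝ) / 2)) * |(NumberField.discr F : ℝ)|⁻¹ ≤
      ∏ σ : F →+* ℂ,
        (dotProduct (star fun j => σ (z j : F)) ((H σ).mulVec fun j => σ (z j : F))).re := by
  
  classical
  set hterm : (F →+* ℂ) → ℝ := fun σ =>
    (dotProduct (star fun j => σ (z j : F)) ((H σ).mulVec fun j => σ (z j : F))).re
    with hterm_def
  obtain ⟨j₀, hj₀⟩ := Function.ne_iff.mp hz
  have hj₀F : (z j₀ : F) ≠ 0 := RingOfIntegers.coe_ne_zero_iff.mpr hj₀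
  have hvne : ∀ σ : F →+* ℂ, (fun j => σ (z j : F)) ≠ 0 := by
    intro σ h0
    exact hj₀F (σ.injective (by simpa using congrFun h0 j₀))
  have hpos : ∀ σ, 0 < hterm σ := by
    intro σ
    have h := (hH.1 σ).dotProduct_mulVec_pos (hvne σ)
    rw [Complex.lt_def] at h
    simpa using h.1
  -- conjugation invariance
  have hconj : ∀ σ : F →+* ℂ, hterm ((starRingEnd ℂ).comp σ) = hterm σ := by
    intro σ
    have h1 : (fun j => ((starRingEnd ℂ).comp σ) ((z j : F))) =
        fun j => (starRingEnd ℂ) (σ (z j : F)) := rfl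
    rw [hterm_def]
    simp only [hH.2 σ, h1, aux_conj_dot, Complex.conj_re]
  have hplace : ∀ σ : F →+* ℂ, hterm (InfinitePlace.mk σ).embedding = hterm σ := by
    intro σ
    rcases NumberField.InfinitePlace.embedding_mk_eq σ with h | h
    · rw [h]
    · rw [h, show NumberField.ComplexEmbedding.conjugate σ = (starRingEnd ℂ).comp σ from
        RingHom.ext fun x => rfl]
      exact hconj σ
  set P : ℝ := ∏ σ : F →+* ℂ, hterm σ with hP_def
  have hP : 0 < P := Finset.prod_pos fun σ _ => hpos σ
  by_contra hcon
  push_neg at hcon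
  -- numerics
  have hd0 : 0 < d := by rw [hd]; exact Module.finrank_pos
  have hd1 : (1 : ℝ) ≤ (d : ℝ) := by exact_mod_cast hd0
  have hdR : (0 : ℝ) < (d : ℝ) := by positivity
  have hDne : (NumberField.discr F : ℝ) ≠ 0 := by
    exact_mod_cast NumberField.discr_ne_zero F
  have hDabs : (0 : ℝ) < |(NumberField.discr F : ℝ)| := abs_pos.mpr hDne
  set K₀ : ℝ := (d : ℝ)⁻¹ with hK₀_def
  have hK₀ : 0 < K₀ := by positivity
  have hcard : Fintype.card (F →+* ℂ) = d := by
    rw [NumberField.Embeddings.card F ℂ, hd]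
  have hne : Nonempty (F →+* ℂ) := Fintype.card_pos_iff.mp (by rw [hcard]; omega)
  have hDP : |(NumberField.discr F : ℝ)| * P < K₀ ^ d := by
    have h1 : |(NumberField.discr F : ℝ)| * P <
        (d : ℝ) ^ (-(3 * (d : ℝ) / 2)) := by
      have := mul_lt_mul_of_pos_left hcon hDabs
      calc |(NumberField.discr F : ℝ)| * P
          < |(NumberField.discr F : ℝ)| *
            ((d : ℝ) ^ (-(3 * (d : ℝ) / 2)) * |(NumberField.discr F : ℝ)|⁻¹) := this
        _ = (d : ℝ) ^ (-(3 * (d : ℝ) / 2)) := by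
            field_simp
    have h2 : (d : ℝ) ^ (-(3 * (d : ℝ) / 2)) ≤ (d : ℝ) ^ (-(d : ℝ)) :=
      Real.rpow_le_rpow_of_exponent_le hd1 (by linarith)
    have h3 : (d : ℝ) ^ (-(d : ℝ)) = K₀ ^ d := by
      rw [Real.rpow_neg hdR.le, Real.rpow_natCast, hK₀_def, inv_pow]
    linarith
  -- the convex body data
  set g : InfinitePlace F → ℝ := fun w => hterm w.embedding with hg_def
  have hgpos : ∀ w, 0 < g w := fun w => hpos _
  set f : InfinitePlace F → NNReal := fun w => Real.toNNReal (Real.sqrt (K₀ / g w)) with hf_def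
  have hf : ∀ w, (f w : ℝ) = Real.sqrt (K₀ / g w) := fun w =>
    Real.coe_toNNReal _ (Real.sqrt_nonneg _)
  have hfσ : ∀ σ : F →+* ℂ, (f (InfinitePlace.mk σ) : ℝ) = Real.sqrt (K₀ / hterm σ) := by
    intro σ
    rw [hf, hg_def]
    simp only [hplace σ]
  -- product over places
  have hfib : ∏ σ : F →+* ℂ, (f (InfinitePlace.mk σ) : ℝ) =
      ∏ w : InfinitePlace F, (f w : ℝ) ^ InfinitePlace.mult w := by
    rw [← Finset.prod_fiberwise Finset.univ InfinitePlace.mk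
      (fun σ => (f (InfinitePlace.mk σ) : ℝ))]
    refine Finset.prod_congr rfl fun w _ => ?_
    rw [Finset.prod_congr rfl (fun σ hσ => ?_), Finset.prod_const,
      NumberField.InfinitePlace.card_filter_mk_eq]
    rw [(Finset.mem_filter.mp hσ).2]
  have hsqrtlt : Real.sqrt |(NumberField.discr F : ℝ)| <
      ∏ σ : F →+* ℂ, Real.sqrt (K₀ / hterm σ) := by
    have hR : 0 < ∏ σ : F →+* ℂ, Real.sqrt (K₀ / hterm σ) :=
      Finset.prod_pos fun σ _ => Real.sqrt_pos.mpr (div_pos hK₀ (hpos σ))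
    rw [show Real.sqrt |(NumberField.discr F : ℝ)| < _ ↔ _ from Real.sqrt_lt' hR]
    have hR2 : (∏ σ : F →+* ℂ, Real.sqrt (K₀ / hterm σ)) ^ 2 = K₀ ^ d / P := by
      rw [← Finset.prod_pow]
      rw [Finset.prod_congr rfl fun σ _ =>
        Real.sq_sqrt (div_pos hK₀ (hpos σ)).le]
      rw [Finset.prod_div_distrib, Finset.prod_const, Finset.card_univ, hcard, hP_def]
    rw [hR2, lt_div_iff₀ hP]
    exact hDP
  -- the volume inequality
  have hvol : NumberField.mixedEmbedding.minkowskiBound F ↑1 <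
      MeasureTheory.volume (NumberField.mixedEmbedding.convexBodyLT F f) := by
    rw [NumberField.mixedEmbedding.convexBodyLT_volume,
      NumberField.mixedEmbedding.minkowskiBound,
      NumberField.mixedEmbedding.volume_fundamentalDomain_fractionalIdealLatticeBasis,
      NumberField.mixedEmbedding.volume_fundamentalDomain_latticeBasis,
      NumberField.mixedEmbedding.finrank]
    simp only [Units.val_one, FractionalIdeal.absNorm_one, Rat.cast_one, ENNReal.ofReal_one,
      one_mul]
    rw [show (2:ENNReal)⁻¹ = ((2⁻¹ : NNReal) : ENNReal) by
        rw [ENNReal.coe_inv two_ne_zero, ENNReal.coe_ofNat],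
      show (2:ENNReal) = ((2 : NNReal) : ENNReal) by rw [ENNReal.coe_ofNat],
      ← ENNReal.coe_pow, ← ENNReal.coe_pow, ← ENNReal.coe_mul, ← ENNReal.coe_mul,
      ← ENNReal.coe_mul, ENNReal.coe_lt_coe, ← NNReal.coe_lt_coe]
    push_cast
    rw [show ‖NumberField.discr F‖ = |(NumberField.discr F : ℝ)| by
        rw [Int.norm_eq_abs], NNReal.coe_real_pi]
    have hrank : InfinitePlace.nrRealPlaces F + 2 * InfinitePlace.nrComplexPlaces F
        = Module.finrank ℚ F := NumberField.InfinitePlace.card_add_two_mul_card_eq_rank F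
    rw [← hrank]
    have hprod_eq : ∏ w : InfinitePlace F, (f w : ℝ) ^ (InfinitePlace.mult w) =
        ∏ σ : F →+* ℂ, Real.sqrt (K₀ / hterm σ) := by
      rw [← hfib]
      exact Finset.prod_congr rfl fun σ _ => hfσ σ
    set r₁ := InfinitePlace.nrRealPlaces F
    set r₂ := InfinitePlace.nrComplexPlaces F
    calc ((2:ℝ)⁻¹) ^ r₂ * Real.sqrt |(NumberField.discr F : ℝ)| * 2 ^ (r₁ + 2 * r₂)
        = 2 ^ r₁ * ((2:ℝ) ^ r₂ * Real.sqrt |(NumberField.discr F : ℝ)|) := by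
          rw [pow_add, pow_mul]
          field_simp
          ring_nf
          congr 1
          rw [show (4:ℝ) = 2^2 by norm_num, ← pow_mul, mul_comm]
          rw [pow_mul, ← mul_pow]; norm_num
      _ < 2 ^ r₁ * (Real.pi ^ r₂ * ∏ w : InfinitePlace F, (f w : ℝ) ^ (InfinitePlace.mult w)) := by
          rw [mul_lt_mul_iff_right₀ (by positivity : (0:ℝ) < 2 ^ r₁), hprod_eq]
          exact mul_lt_mul' (pow_le_pow_left₀ (by norm_num) Real.two_le_pi r₂) hsqrtlt
            (Real.sqrt_nonneg _) (by positivity)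
      _ = 2 ^ r₁ * Real.pi ^ r₂ * ∏ w : InfinitePlace F, (f w : ℝ) ^ (InfinitePlace.mult w) := by
          ring
  obtain ⟨α, hα0, hαlt⟩ := NumberField.mixedEmbedding.exists_ne_zero_mem_ringOfIntegers_lt F hvol
  have hj₀' : z j₀ ≠ 0 := by simpa using hj₀
  set x : Fin N → 𝓞 F := fun j => α * z j with hx_def
  have hx : x ≠ 0 := by
    intro h0
    have h1 := congrFun h0 j₀
    simp only [hx_def, Pi.zero_apply] at h1
    exact (mul_ne_zero hα0 hj₀') h1
  have h1le : (1:ℝ) ≤ hermQ H (fun j => (x j : F)) := hwr.1.2 ⟨x, hx, rfl⟩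
  have hqeq : hermQ H (fun j => (x j : F)) =
      ∑ σ : F →+* ℂ, ‖σ ((α : 𝓞 F) : F)‖ ^ 2 * hterm σ := by
    simp only [hermQ]
    refine Finset.sum_congr rfl fun σ _ => ?_
    have hvec : (fun j => σ ((x j : F))) = σ ((α : 𝓞 F) : F) • (fun j => σ ((z j : F))) := by
      funext j
      simp only [hx_def, Pi.smul_apply, smul_eq_mul, ← map_mul]
    rw [hvec, aux_dot_smul, Complex.re_ofReal_mul]
  have hsum_lt : ∑ σ : F →+* ℂ, ‖σ ((α : 𝓞 F) : F)‖ ^ 2 * hterm σ < 1 := by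
    have hterm_lt : ∀ σ : F →+* ℂ, ‖σ ((α : 𝓞 F) : F)‖ ^ 2 * hterm σ < K₀ := by
      intro σ
      have h1 : ‖σ ((α : 𝓞 F) : F)‖ < Real.sqrt (K₀ / hterm σ) := by
        have h2 := hαlt (InfinitePlace.mk σ)
        rw [NumberField.InfinitePlace.apply, hfσ σ] at h2
        exact h2
      have h2 : ‖σ ((α : 𝓞 F) : F)‖ ^ 2 < K₀ / hterm σ := by
        have h3 := pow_lt_pow_left₀ h1 (norm_nonneg _) two_ne_zero
        rwa [Real.sq_sqrt (div_pos hK₀ (hpos σ)).le] at h3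
      calc ‖σ ((α : 𝓞 F) : F)‖ ^ 2 * hterm σ < (K₀ / hterm σ) * hterm σ :=
            mul_lt_mul_of_pos_right h2 (hpos σ)
        _ = K₀ := div_mul_cancel₀ _ (hpos σ).ne'
    calc ∑ σ : F →+* ℂ, ‖σ ((α : 𝓞 F) : F)‖ ^ 2 * hterm σ
        < ∑ _σ : F →+* ℂ, K₀ :=
          Finset.sum_lt_sum_of_nonempty (Finset.univ_nonempty_iff.mpr hne)
            (fun σ _ => hterm_lt σ)
      _ = d * K₀ := by rw [Finset.sum_const, Finset.card_univ, hcard, nsmul_eq_mul]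
      _ = 1 := by rw [hK₀_def]; field_simp
  rw [hqeq] at h1le
  linarith
end
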